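/- Let k ≥ 2 be an integer and let g = 2^ℓ·f where ℓ ≥ 0 and f ≥ 1 is odd. Then for every integer n ≥ kf + ℓ + log₂ f, there exist a natural number s that is the sum of at most 2^{kf−1} binary k'th powers and an integer t with 0 ≤ t ≤ 2^{kf−1} such that ⌊2^n/g⌋ = s + t. -/

import Mathlib

/-- `ck k n = 1 + 2^n + 2^(2n) + ⋯ + 2^((k-1)n)`. -/
def ck (k n : ℕ) : ℕ := ∑ i ∈ Finset.range k, 2 ^ (i * n)

/-- `m` is a binary `k`'th power: `m = a * ck k n` for some `n ≥ 1` and `2^(n-1) ≤ a < 2^n`. -/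
def IsBinaryKthPower (k m : ℕ) : Prop :=
  ∃ n a : ℕ, 1 ≤ n ∧ 2 ^ (n - 1) ≤ a ∧ a < 2 ^ n ∧ m = a * ck k n

lemma ck_zero (p : ℕ) : ck 0 p = 0 := by simp [ck]

lemma ck_succ (k p : ℕ) : ck (k+1) p = ck k p + 2^(k*p) := Finset.sum_range_succ _ _

lemma ck_one (p : ℕ) : ck 1 p = 1 := by simp [ck]

lemma ck_addl (a b p : ℕ) : ck (a + b) p = ck a p + 2^(a*p) * ck b p := by
  induction b with
  | zero => simp [ck_zero]
  | succ b ih =>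
    rw [show a + (b+1) = (a+b)+1 from rfl, ck_succ, ih, ck_succ, mul_add, add_mul, pow_add]
    ring

lemma ck_mull (k q p : ℕ) : ck (k*q) p = ck q p * ck k (q*p) := by
  induction k with
  | zero => simp [ck_zero]
  | succ k ih =>
    rw [show (k+1)*q = k*q + q from by ring, ck_addl, ih, ck_succ, mul_add, mul_assoc]
    ring

lemma ck_geom (x Q p : ℕ) (hx : x + 1 = 2^p) : x * ck Q p + 1 = 2^(Q*p) := by
  induction Q with
  | zero => simp [ck_zero]
  | succ Q ih =>
    rw [ck_succ, mul_add, show (Q+1)*p = Q*p + p from by ring, pow_add]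
    calc x * ck Q p + x * 2^(Q*p) + 1 = 2^(Q*p) + x * 2^(Q*p) := by omega
      _ = 2^(Q*p) * (x+1) := by ring
      _ = 2^(Q*p) * 2^p := by rw [hx]

lemma ck_lower (q p : ℕ) (hq : 1 ≤ q) : 2^((q-1)*p) ≤ ck q p := by
  obtain ⟨q', rfl⟩ := Nat.exists_eq_add_of_le hq
  rw [show 1 + q' = q' + 1 from by ring, ck_succ]
  simp

lemma ck_upper (q p : ℕ) (hp : 1 ≤ p) (hq : 1 ≤ q) : ck q p ≤ 2^((q-1)*p + 1) := by
  induction q with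
  | zero => omega
  | succ q ih =>
    rcases Nat.eq_or_lt_of_le hq with h1 | h1
    · simp [← h1, ck_one]
    · have hq1 : 1 ≤ q := by omega
      have := ih hq1
      rw [ck_succ]
      have he : (q-1)*p + 1 ≤ q*p := by
        have : (q-1)*p + p = q*p := by
          conv_rhs => rw [show q = (q-1)+1 from by omega]
          ring
        omega
      have h2 : ck q p ≤ 2^(q*p) := le_trans this (Nat.pow_le_pow_right (by norm_num) he)
      have : 2^(q*p) + 2^(q*p) = 2^(q*p+1) := by rw [pow_succ]; ring
      have hgoal : (q+1-1)*p + 1 = q*p + 1 := by simp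
      rw [hgoal]
      omega

lemma repr_sum (L : ℕ) (hL : 1 ≤ L) : ∀ J D : ℕ, L ≤ D → D ≤ J * (2*L - 1) →
    ∃ l : Multiset ℕ, l.card ≤ J ∧ (∀ x ∈ l, L ≤ x ∧ x ≤ 2*L-1) ∧ l.sum = D := by
  intro J
  induction J with
  | zero => intro D h1 h2; simp at h2; omega
  | succ J ih =>
    intro D h1 h2
    by_cases hd : D ≤ 2*L - 1
    · exact ⟨{D}, by simp, by intro x hx; simp at hx; omega, by simp⟩
    · have hD2 : 2*L ≤ D := by omega
      have hexp : (J+1) * (2*L-1) = J * (2*L-1) + (2*L-1) := by ring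
      by_cases hbig : 2*L - 1 + L ≤ D
      · obtain ⟨l, hc, hb, hs⟩ := ih (D - (2*L-1)) (by omega) (by omega)
        refine ⟨(2*L-1) ::ₘ l, by simp; omega, ?_, by simp [hs]; omega⟩
        intro x hx
        rcases Multiset.mem_cons.mp hx with h | h
        · omega
        · exact hb x h
      · -- D < 3L - 1, D ≥ 2L, so J ≥ 1, use {L, D - L}
        have hJ : 1 ≤ J := by
          by_contra hJ0
          have : J = 0 := by omega
          subst this
          simp at h2; omega
        refine ⟨L ::ₘ {D - L}, by simp; omega, ?_, by simp; omega⟩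
        intro x hx
        simp [Multiset.mem_cons] at hx
        rcases hx with h | h <;> omega

lemma multiset_sum_map_mul (l : Multiset ℕ) (c : ℕ) :
    (l.map (fun a => a * c)).sum = l.sum * c := by
  induction l using Multiset.induction_on with
  | empty => simp
  | cons a l ih => simp [ih, add_mul]

lemma master (k p f h q r rho m : ℕ) (hp : 1 ≤ p) (hq : 1 ≤ q)
    (hf : 1 ≤ f) (hfh : f * h + 1 = 2^p) (hm : m = (k*q + r)*p + rho)
    (hDlo : 2^(q*p - 1) ≤ h * 2^(rho + r*p) * ck q p)
    (hDhi : h * 2^(rho + r*p) * ck q p ≤ 2^(k*f-1) * (2*2^(q*p - 1) - 1))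
    (ht : h * 2^rho * ck r p + 2^rho / f ≤ 2^(k*f - 1)) :
    ∃ s t : ℕ,
      (∃ l : Multiset ℕ, l.card ≤ 2 ^ (k * f - 1) ∧
        (∀ x ∈ l, IsBinaryKthPower k x) ∧ l.sum = s) ∧
      t ≤ 2 ^ (k * f - 1) ∧ 2 ^ m / f = s + t := by
  set Q := k*q + r with hQ
  set D := h * 2^(rho + r*p) * ck q p with hD
  set C := ck k (q*p) with hC
  have hqp : 1 ≤ q*p := Nat.mul_le_mul hq hp
  have hL : (1:ℕ) ≤ 2^(q*p - 1) := Nat.one_le_two_pow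
  -- T = h*2^rho*ck Q p + 2^rho/f
  have hgeom : f * h * ck Q p + 1 = 2^(Q*p) := ck_geom (f*h) Q p hfh
  have hT : 2^m / f = h * 2^rho * ck Q p + 2^rho / f := by
    have h2m : 2^m = f * (h * 2^rho * ck Q p) + 2^rho := by
      rw [hm, pow_add]
      calc 2^(Q*p) * 2^rho = (f * h * ck Q p + 1) * 2^rho := by rw [hgeom]
        _ = f * (h * 2^rho * ck Q p) + 2^rho := by ring
    rw [h2m, Nat.mul_add_div (by omega)]
  -- decomposition
  have hdec : h * 2^rho * ck Q p = D * C + h * 2^rho * ck r p := by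
    rw [hQ, show k*q + r = r + k*q from by ring, ck_addl, ck_mull, hD, hC, pow_add]
    ring
  -- representation of D
  obtain ⟨l0, hcard, hbnd, hsum⟩ := repr_sum (2^(q*p-1)) hL (2^(k*f-1)) D hDlo hDhi
  refine ⟨D * C, h * 2^rho * ck r p + 2^rho / f, ⟨l0.map (fun a => a * C), ?_, ?_, ?_⟩, ht, ?_⟩
  · simpa using hcard
  · intro x hx
    obtain ⟨a, ha, rfl⟩ := Multiset.mem_map.mp hx
    obtain ⟨ha1, ha2⟩ := hbnd a ha
    refine ⟨q*p, a, hqp, ha1, ?_, rfl⟩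
    have : 2 * 2^(q*p-1) = 2^(q*p) := by
      rw [← pow_succ']
      congr 1
      omega
    omega
  · rw [multiset_sum_map_mul, hsum]
  · rw [hT, hdec]; ring

/-- Let `k ≥ 2` and `g = 2^ℓ·f` with `f ≥ 1` odd. For every `n ≥ kf + ℓ + log₂ f`,
`⌊2^n/g⌋ = s + t` where `s` is a sum of at most `2^(kf-1)` binary `k`'th powers and
`0 ≤ t ≤ 2^(kf-1)`. -/
theorem floor_pow_div_sum_binary_kth_powers (k ℓ f g : ℕ) (hk : 2 ≤ k) (hf : 1 ≤ f)
    (hodd : Odd f) (hg : g = 2 ^ ℓ * f) (n : ℕ)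
    (hn : (k * f + ℓ : ℝ) + Real.logb 2 f ≤ (n : ℝ)) :
    ∃ s t : ℕ,
      (∃ l : Multiset ℕ, l.card ≤ 2 ^ (k * f - 1) ∧
        (∀ x ∈ l, IsBinaryKthPower k x) ∧ l.sum = s) ∧
      t ≤ 2 ^ (k * f - 1) ∧ 2 ^ n / g = s + t := by
  -- Step 1: translate the real hypothesis
  have hf0 : (0:ℝ) < f := by exact_mod_cast hf
  have hlogb0 : 0 ≤ Real.logb 2 f := Real.logb_nonneg (by norm_num) (by exact_mod_cast hf)
  have hn1 : k * f + ℓ ≤ n := by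
    have : ((k * f + ℓ : ℕ) : ℝ) ≤ (n : ℝ) := by push_cast; linarith
    exact_mod_cast this
  set m := n - ℓ with hm'
  have hnm : n = ℓ + m := by omega
  have hmkf : k * f ≤ m := by omega
  have hfm : f * 2^(k*f) ≤ 2^m := by
    have h1 : Real.logb 2 f ≤ ((m - k*f : ℕ) : ℝ) := by
      rw [Nat.cast_sub hmkf]
      push_cast
      push_cast at hn
      have hnmR : (n:ℝ) = (ℓ:ℝ) + (m:ℝ) := by exact_mod_cast congrArg (Nat.cast : ℕ → ℝ) hnm
      linarith
    have h2 : (f:ℝ) ≤ (2:ℝ) ^ ((m - k*f : ℕ):ℝ) :=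
      (Real.logb_le_iff_le_rpow (by norm_num) hf0).mp h1
    rw [Real.rpow_natCast] at h2
    have h3 : f ≤ 2^(m - k*f) := by exact_mod_cast h2
    calc f * 2^(k*f) ≤ 2^(m-k*f) * 2^(k*f) := Nat.mul_le_mul_right _ h3
      _ = 2^m := by rw [← pow_add]; congr 1; omega
  -- Step 2: reduce to 2^m / f
  have hred : 2^n / g = 2^m / f := by
    rw [hg, hnm, pow_add, Nat.mul_div_mul_left _ _ (by positivity)]
  rw [hred]
  -- Step 3: set up p, h
  set p := Nat.totient f with hp'
  have hp : 1 ≤ p := Nat.totient_pos.mpr (by omega)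
  have hpf : p ≤ f := Nat.totient_le f
  have hdvd : f ∣ 2^p - 1 := by
    have hc : Nat.Coprime 2 f := Nat.coprime_two_left.mpr hodd
    have := Nat.ModEq.pow_totient hc
    exact (Nat.modEq_iff_dvd' Nat.one_le_two_pow).mp this.symm
  obtain ⟨h, hh⟩ := hdvd
  have hfh : f * h + 1 = 2^p := by
    have : 1 ≤ 2^p := Nat.one_le_two_pow
    omega
  have hh1 : 1 ≤ h := by
    rcases Nat.eq_zero_or_pos h with h0 | h0
    · subst h0
      simp at hfh
      have : 2 ≤ 2^p := by calc 2 = 2^1 := by norm_num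
                                _ ≤ 2^p := Nat.pow_le_pow_right (by norm_num) hp
      omega
    · exact h0
  -- Step 4: set up Q, rho, q, r
  set Q := m / p with hQ'
  set rho := m % p with hrho'
  have hmQ : m = Q * p + rho := by rw [hQ', hrho', Nat.mul_comm]; exact (Nat.div_add_mod m p).symm
  have hrhop : rho < p := Nat.mod_lt _ (by omega)
  have hkfm : 2^(k*f) ≤ 2^m := le_trans (Nat.le_mul_of_pos_left _ (by omega)) hfm
  have hQk : k ≤ Q := by
    rw [hQ', Nat.le_div_iff_mul_le (by omega)]
    calc k * p ≤ k * f := Nat.mul_le_mul_left _ hpf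
      _ ≤ m := hmkf
  set q := Q / k with hq'
  set r := Q % k with hr'
  have hQq : Q = k * q + r := by rw [hq', hr']; exact (Nat.div_add_mod Q k).symm
  have hq1 : 1 ≤ q := by
    rw [hq', Nat.le_div_iff_mul_le (by omega)]; omega
  have hrk : r < k := Nat.mod_lt _ (by omega)
  have hkf1 : k * p ≤ k * f := Nat.mul_le_mul_left _ hpf
  have hgoal_m : m = (k*q + r)*p + rho := by rw [← hQq]; exact hmQ
  -- useful: geometric identities
  have hckq : f * h * ck q p + 1 = 2^(q*p) := ck_geom (f*h) q p hfh
  have hckr : f * h * ck r p + 1 = 2^(r*p) := ck_geom (f*h) r p hfh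
  have hpow2 : ∀ a b : ℕ, a ≤ b → (2:ℕ)^a ≤ 2^b :=
    fun a b hab => Nat.pow_le_pow_right (by norm_num) hab
  have hqp1 : 1 ≤ q*p := Nat.mul_le_mul hq1 hp
  have hkf2 : 2 ≤ k*f := le_trans hk (Nat.le_mul_of_pos_right k (by omega))
  -- rho + r*p ≤ k*f - 1
  have hexpA : rho + r*p ≤ k*f - 1 := by
    have h1 : r*p ≤ (k-1)*p := Nat.mul_le_mul_right p (by omega)
    have h2 : (k-1)*p + p = k*p := by
      conv_rhs => rw [show k = (k-1)+1 from by omega]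
      ring
    omega
  clear_value m Q rho q r
  by_cases hgood : 2^(q*p - 1) ≤ h * 2^(rho + r*p) * ck q p
  · -- Case A
    refine master k p f h q r rho m hp hq1 hf hfh hgoal_m hgood ?_ ?_
    · -- hDhi
      set D := h * 2^(rho + r*p) * ck q p with hD
      have h2L : 2*2^(q*p-1) = 2^(q*p) := by
        rw [← pow_succ']
        congr 1
        omega
      rw [h2L]
      have key : f * D + 2^(rho+r*p) = 2^(rho + r*p) * 2^(q*p) := by
        calc f * D + 2^(rho+r*p) = 2^(rho+r*p) * (f * h * ck q p + 1) := by rw [hD]; ring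
          _ = 2^(rho+r*p) * 2^(q*p) := by rw [hckq]
      have hDle : D ≤ f * D := Nat.le_mul_of_pos_left D (by omega)
      have hG : 2^(rho+r*p) * (2^(q*p) - 1) ≤ 2^(k*f-1) * (2^(q*p) - 1) :=
        Nat.mul_le_mul_right _ (hpow2 _ _ hexpA)
      have hG2 : 2^(rho+r*p) * (2^(q*p) - 1) + 2^(rho+r*p) * 1 = 2^(rho+r*p) * 2^(q*p) := by
        rw [← Nat.mul_add]
        congr 1
        have : (1:ℕ) ≤ 2^(q*p) := Nat.one_le_two_pow
        omega
      omega
    · -- ht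
      set X := h * 2^rho * ck r p with hX
      have key : f * X + 2^rho = 2^rho * 2^(r*p) := by
        calc f * X + 2^rho = 2^rho * (f * h * ck r p + 1) := by rw [hX]; ring
          _ = 2^rho * 2^(r*p) := by rw [hckr]
      have hXle : X ≤ f * X := Nat.le_mul_of_pos_left X (by omega)
      have ht0 : 2^rho / f ≤ 2^rho := Nat.div_le_self _ _
      have hpr : (2:ℕ)^rho * 2^(r*p) = 2^(rho + r*p) := by rw [← pow_add]
      have hup : (2:ℕ)^(rho + r*p) ≤ 2^(k*f-1) := hpow2 _ _ hexpA
      omega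
  · -- Case B
    have hr0 : r = 0 := by
      by_contra hr1
      apply hgood
      have hrp : p ≤ rho + r*p := by
        have : p ≤ r*p := Nat.le_mul_of_pos_left p (by omega)
        omega
      have c1 : 2^((q-1)*p) ≤ ck q p := ck_lower q p hq1
      have e1 : p + (q-1)*p = q*p := by
        conv_rhs => rw [show q = (q-1)+1 from by omega]
        ring
      calc 2^(q*p - 1) ≤ 2^(q*p) := hpow2 _ _ (by omega)
        _ = 2^p * 2^((q-1)*p) := by rw [← pow_add, e1]
        _ ≤ (h * 2^(rho + r*p)) * ck q p := by
            apply Nat.mul_le_mul _ c1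
            calc 2^p ≤ 1 * 2^(rho + r*p) := by rw [one_mul]; exact hpow2 _ _ hrp
              _ ≤ h * 2^(rho + r*p) := Nat.mul_le_mul_right _ hh1
    subst hr0
    simp only [Nat.zero_mul, Nat.add_zero] at hgood
    have hbad : h * 2^rho * ck q p < 2^(q*p - 1) := Nat.lt_of_not_le hgood
    -- h * 2^rho < 2^(p-1)
    have hsmall : h * 2^rho < 2^(p-1) := by
      have c1 : 2^((q-1)*p) ≤ ck q p := ck_lower q p hq1
      have e1 : (p-1) + (q-1)*p = q*p - 1 := by
        have h2 : (q-1)*p + p = q*p := by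
          conv_rhs => rw [show q = (q-1)+1 from by omega]
          ring
        omega
      have : h * 2^rho * 2^((q-1)*p) < 2^(p-1) * 2^((q-1)*p) := by
        calc h * 2^rho * 2^((q-1)*p) ≤ h * 2^rho * ck q p := Nat.mul_le_mul_left _ c1
          _ < 2^(q*p-1) := hbad
          _ = 2^(p-1) * 2^((q-1)*p) := by rw [← pow_add, e1]
      exact lt_of_mul_lt_mul_right this (Nat.zero_le _)
    have hrhof : 2^rho < f := by
      have h1 : (2:ℕ)^(p-1) * 2^rho ≤ (f*h) * 2^rho := by
        apply Nat.mul_le_mul_right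
        have : 2^p = 2*2^(p-1) := by
          rw [← pow_succ']
          congr 1
          omega
        omega
      have h2 : f * (h * 2^rho) < f * 2^(p-1) := (Nat.mul_lt_mul_left (by omega)).mpr hsmall
      have h3 : (2:ℕ)^(p-1) * 2^rho < 2^(p-1) * f := by
        calc (2:ℕ)^(p-1) * 2^rho ≤ (f*h) * 2^rho := h1
          _ = f * (h * 2^rho) := by ring
          _ < f * 2^(p-1) := h2
          _ = 2^(p-1) * f := by ring
      exact lt_of_mul_lt_mul_left h3 (Nat.zero_le _)
    have h1rho : (1:ℕ) ≤ 2^rho := Nat.one_le_two_pow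
    have hf2 : 2 ≤ f := by omega
    have hf3 : 3 ≤ f := by
      obtain ⟨w, hw⟩ := hodd
      omega
    have hpf1 : p + 1 ≤ f := by
      have := Nat.totient_lt f (by omega)
      omega
    have hq2 : 2 ≤ q := by
      by_contra hq2
      have hq1' : q = 1 := by omega
      have hmval : m = k*p + rho := by
        rw [hgoal_m, hq1']
        ring
      have e1 : (2:ℕ)^m = 2^(k*p) * 2^rho := by rw [hmval, pow_add]
      have e2 : (2:ℕ)^(k*p) * 2^rho < 2^(k*p) * f := (Nat.mul_lt_mul_left (by positivity)).mpr hrhof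
      have e3 : (2:ℕ)^(k*p) * f ≤ 2^(k*f) * f :=
        Nat.mul_le_mul_right _ (hpow2 _ _ (Nat.mul_le_mul_left k hpf))
      have : (2:ℕ)^m < f * 2^(k*f) := by
        calc (2:ℕ)^m = 2^(k*p) * 2^rho := e1
          _ < 2^(k*p) * f := e2
          _ ≤ 2^(k*f) * f := e3
          _ = f * 2^(k*f) := by ring
      omega
    -- apply master with q-1, k-1, rho+p
    have hkp2 : k*p + 2 ≤ k*f := by
      have h1 : k*(p+1) ≤ k*f := Nat.mul_le_mul_left k hpf1
      have h2 : k*(p+1) = k*p + k := by ring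
      omega
    have hE1 : 1 ≤ (q-1)*p := by
      have : 1*1 ≤ (q-1)*p := Nat.mul_le_mul (by omega) hp
      omega
    have hgoal_mB : m = (k*(q-1) + (k-1))*p + (rho + p) := by
      have h1 : k*(q-1) + k = k*q := by
        conv_rhs => rw [show q = (q-1)+1 from by omega]
        ring
      have h2 : (k*(q-1) + (k-1))*p + (rho+p) = (k*(q-1)+(k-1)+1)*p + rho := by ring
      have h3 : k*(q-1)+(k-1)+1 = k*q := by omega
      rw [h2, h3, hgoal_m]
      ring
    refine master k p f h (q-1) (k-1) (rho+p) m hp (by omega) hf hfh hgoal_mB ?_ ?_ ?_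
    · -- hDlo
      have c1 : 2^((q-1-1)*p) ≤ ck (q-1) p := ck_lower (q-1) p (by omega)
      have eq2 : q-1-1 = q-2 := by omega
      rw [eq2] at c1
      have e1 : (q-2)*p + p = (q-1)*p := by
        conv_rhs => rw [show q-1 = (q-2)+1 from by omega]
        ring
      calc 2^((q-1)*p - 1) ≤ 2^(((rho+p)+(k-1)*p) + (q-2)*p) := hpow2 _ _ (by omega)
        _ = 2^((rho+p)+(k-1)*p) * 2^((q-2)*p) := by rw [pow_add]
        _ = 1 * 2^((rho+p)+(k-1)*p) * 2^((q-2)*p) := by ring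
        _ ≤ h * 2^((rho+p)+(k-1)*p) * ck (q-1) p :=
            Nat.mul_le_mul (Nat.mul_le_mul_right _ hh1) c1
    · -- hDhi
      have h2L : 2*2^((q-1)*p-1) = 2^((q-1)*p) := by
        rw [← pow_succ']
        congr 1
        omega
      rw [h2L]
      have hup : ck (q-1) p ≤ 2^((q-1-1)*p + 1) := ck_upper (q-1) p hp (by omega)
      have eq2 : q-1-1 = q-2 := by omega
      rw [eq2] at hup
      have e1 : (q-2)*p + p = (q-1)*p := by
        conv_rhs => rw [show q-1 = (q-2)+1 from by omega]
        ring
      have e2 : (k-1)*p + p = k*p := by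
        conv_rhs => rw [show k = (k-1)+1 from by omega]
        ring
      have hL1 : h * 2^((rho+p)+(k-1)*p) * ck (q-1) p
          ≤ 2^(p-1) * 2^(p+(k-1)*p) * 2^((q-2)*p+1) := by
        have hgr : h * 2^((rho+p)+(k-1)*p) = (h * 2^rho) * 2^(p+(k-1)*p) := by
          rw [show (rho+p)+(k-1)*p = rho + (p + (k-1)*p) from by ring, pow_add]
          ring
        rw [hgr]
        exact Nat.mul_le_mul (Nat.mul_le_mul (by omega) (le_refl _)) hup
      have hL2 : (2:ℕ)^(p-1) * 2^(p+(k-1)*p) * 2^((q-2)*p+1)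
          = 2^((p-1) + (p + (k-1)*p) + ((q-2)*p+1)) := by
        rw [← pow_add, ← pow_add]
      have hexp : (p-1) + (p + (k-1)*p) + ((q-2)*p + 1) ≤ (k*f - 1) + ((q-1)*p - 1) := by
        omega
      have hRHS : 2^((k*f-1) + ((q-1)*p - 1)) ≤ 2^(k*f-1) * (2^((q-1)*p) - 1) := by
        rw [pow_add]
        apply Nat.mul_le_mul_left
        have hss : (2:ℕ)^((q-1)*p) = 2*2^((q-1)*p - 1) := by
          rw [← pow_succ']
          congr 1
          omega
        have h1 : (1:ℕ) ≤ 2^((q-1)*p - 1) := Nat.one_le_two_pow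
        omega
      calc h * 2^((rho+p)+(k-1)*p) * ck (q-1) p
          ≤ 2^(p-1) * 2^(p+(k-1)*p) * 2^((q-2)*p+1) := hL1
        _ = 2^((p-1) + (p + (k-1)*p) + ((q-2)*p+1)) := hL2
        _ ≤ 2^((k*f-1) + ((q-1)*p-1)) := hpow2 _ _ hexp
        _ ≤ 2^(k*f-1) * (2^((q-1)*p) - 1) := hRHS
    · -- ht
      have hup : ck (k-1) p ≤ 2^((k-1-1)*p + 1) := ck_upper (k-1) p hp (by omega)
      have eqk : k-1-1 = k-2 := by omega
      rw [eqk] at hup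
      have e2 : (k-2)*p + p = (k-1)*p := by
        conv_rhs => rw [show k-1 = (k-2)+1 from by omega]
        ring
      have e3 : (k-1)*p + p = k*p := by
        conv_rhs => rw [show k = (k-1)+1 from by omega]
        ring
      have hL1 : h * 2^(rho+p) * ck (k-1) p ≤ 2^(p-1) * 2^p * 2^((k-2)*p + 1) := by
        have hgr : h * 2^(rho+p) = (h*2^rho) * 2^p := by
          rw [pow_add]
          ring
        rw [hgr]
        exact Nat.mul_le_mul (Nat.mul_le_mul (by omega) (le_refl _)) hup
      have hL2 : (2:ℕ)^(p-1) * 2^p * 2^((k-2)*p+1) = 2^((p-1)+p+((k-2)*p+1)) := by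
        rw [← pow_add, ← pow_add]
      have hexp1 : (p-1) + p + ((k-2)*p + 1) ≤ k*f - 2 := by omega
      have hterm1 : h * 2^(rho+p) * ck (k-1) p ≤ 2^(k*f-2) :=
        le_trans hL1 (le_trans (le_of_eq hL2) (hpow2 _ _ hexp1))
      have h2p : 2*p ≤ k*p := Nat.mul_le_mul_right p hk
      have hterm2 : 2^(rho+p)/f ≤ 2^(k*f-2) :=
        le_trans (Nat.div_le_self _ _) (hpow2 _ _ (by omega))
      have hs : (2:ℕ)^(k*f-2+1) = 2^(k*f-2)*2 := pow_succ _ _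
      have hs2 : k*f-2+1 = k*f-1 := by omega
      rw [hs2] at hs
      omega
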